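/- Let G be a λ-metric graph on n ≥ 3 vertices and let v be any vertex. Then the sum of edge weights incident to v satisfies Σ_{u ≠ v} w(u,v) > (λ/n)·Σ_{e ∈ E} w(e), where the right-hand sum is over all edges of the complete graph. -/
import Mathlib


/-- In a λ-metric graph on `n ≥ 3` vertices, the total weight of edges
incident to any fixed vertex `v` is at least `(λ/n)` times the total weight of all edges
(the total edge weight being half the sum over ordered pairs of distinct vertices). -/
theorem vertex_weight_lower_bound {V : Type*} [Fintype V] [DecidableEq V]
    (w : V → V → ℝ) (lam : ℝ)
    (hlam_pos : 0 < lam) (hlam_le : lam ≤ 1)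
    (hnonneg : ∀ a b, 0 ≤ w a b)
    (hsymm : ∀ a b, w a b = w b a)
    (htri : ∀ a b c, w a b + w b c ≥ lam * w c a)
    (hn : 3 ≤ Fintype.card V)
    (v : V) :
    ∑ u ∈ Finset.univ.erase v, w u v
      ≥ (lam / Fintype.card V) *
          ((1 / 2) * ∑ a : V, ∑ b ∈ Finset.univ.erase a, w a b) := by
  classical
  set E := (Finset.univ : Finset V).erase v with hE
  set S := ∑ u ∈ E, w u v with hSdef
  set T := ∑ a : V, ∑ b ∈ Finset.univ.erase a, w a b with hTdef
  have hnR : (3:ℝ) ≤ (Fintype.card V : ℝ) := by exact_mod_cast hn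
  have hSnn : 0 ≤ S := Finset.sum_nonneg fun u _ => hnonneg u v
  have hS' : ∑ b ∈ E, w v b = S := by
    apply Finset.sum_congr rfl
    intro b _
    exact hsymm v b
  have hcardE : E.card = Fintype.card V - 1 := by
    rw [hE, Finset.card_erase_of_mem (Finset.mem_univ v), Finset.card_univ]
  -- split T
  have hT : T = 2 * S + ∑ a ∈ E, ∑ b ∈ E.erase a, w a b := by
    rw [hTdef, ← Finset.add_sum_erase _ _ (Finset.mem_univ v), ← hE, hS']
    have h1 : ∀ a ∈ E, (∑ b ∈ Finset.univ.erase a, w a b)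
        = w a v + ∑ b ∈ E.erase a, w a b := by
      intro a ha
      have hav : a ≠ v := Finset.ne_of_mem_erase ha
      have hv : v ∈ Finset.univ.erase a :=
        Finset.mem_erase.mpr ⟨hav.symm, Finset.mem_univ v⟩
      rw [← Finset.add_sum_erase _ _ hv, hE, Finset.erase_right_comm]
    rw [Finset.sum_congr rfl h1, Finset.sum_add_distrib, ← hSdef]
    ring
  -- bound the remaining double sum
  have hR : lam * (∑ a ∈ E, ∑ b ∈ E.erase a, w a b)
      ≤ 2 * ((Fintype.card V : ℝ) - 2) * S := by
    have hstep : ∀ a ∈ E, lam * ∑ b ∈ E.erase a, w a b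
        ≤ ((Fintype.card V : ℝ) - 2) * w a v + (S - w a v) := by
      intro a ha
      rw [Finset.mul_sum]
      have hbound : ∀ b ∈ E.erase a, lam * w a b ≤ w a v + w v b := by
        intro b _
        rw [hsymm a b]
        linarith [htri a v b]
      calc ∑ b ∈ E.erase a, lam * w a b
          ≤ ∑ b ∈ E.erase a, (w a v + w v b) := Finset.sum_le_sum hbound
        _ = ((Fintype.card V : ℝ) - 2) * w a v + (S - w a v) := by
            rw [Finset.sum_add_distrib, Finset.sum_const,
              Finset.sum_erase_eq_sub ha, hS', Finset.card_erase_of_mem ha,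
              hcardE, nsmul_eq_mul, hsymm v a]
            have h2le : 2 ≤ Fintype.card V := by omega
            rw [Nat.sub_sub, Nat.cast_sub h2le]
            norm_num
    calc lam * (∑ a ∈ E, ∑ b ∈ E.erase a, w a b)
        = ∑ a ∈ E, lam * ∑ b ∈ E.erase a, w a b := by rw [Finset.mul_sum]
      _ ≤ ∑ a ∈ E, (((Fintype.card V : ℝ) - 2) * w a v + (S - w a v)) :=
          Finset.sum_le_sum hstep
      _ = 2 * ((Fintype.card V : ℝ) - 2) * S := by
          rw [Finset.sum_add_distrib, ← Finset.mul_sum, Finset.sum_sub_distrib,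
            Finset.sum_const, ← hSdef, hcardE, nsmul_eq_mul]
          have h2 : ((Fintype.card V - 1 : ℕ) : ℝ) = (Fintype.card V : ℝ) - 1 := by
            have : 1 ≤ Fintype.card V := by omega
            push_cast [this]
            ring
          rw [h2]; ring
  have key : lam * T ≤ 2 * (Fintype.card V : ℝ) * S := by
    have h1 : lam * (2 * S) ≤ 2 * S := by nlinarith
    calc lam * T = lam * (2 * S) + lam * (∑ a ∈ E, ∑ b ∈ E.erase a, w a b) := by
          rw [hT]; ring
      _ ≤ 2 * S + 2 * ((Fintype.card V : ℝ) - 2) * S := add_le_add h1 hR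
      _ ≤ 2 * (Fintype.card V : ℝ) * S := by nlinarith
  rw [ge_iff_le]
  have heq : (lam / (Fintype.card V : ℝ)) * ((1/2) * T)
      = lam * T / (2 * (Fintype.card V : ℝ)) := by
    ring
  rw [heq, div_le_iff₀ (by linarith : (0:ℝ) < 2 * (Fintype.card V : ℝ))]
  linarith [key]
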